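/- Let d = (0 = d_0 < d_1 < ... < d_s) be a degree sequence with d_0 = 0 and let r ≥ 0 be an integer. Then, in ℚ, Σ_{i=0}^{s} (-1)^i · d_i^{s+r} / ( Π_{l ≠ i} | d_l − d_i | ) = (-1)^s · Σ_{α_1 + ... + α_s = r, α_i ≥ 0} d_1^{α_1} d_2^{α_2} ··· d_s^{α_s}. -/

import Mathlib

open Finset

/-- complete homogeneous symmetric function -/
def hc (n r : ℕ) (x : ℕ → ℚ) : ℚ :=
  ∑ α ∈ Finset.Nat.antidiagonalTuple n r, ∏ i : Fin n, x (i : ℕ) ^ α i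

lemma hc_zero (n : ℕ) (x : ℕ → ℚ) : hc n 0 x = 1 := by
  simp [hc, Finset.Nat.antidiagonalTuple_zero_right]

lemma hc_nil (r : ℕ) (x : ℕ → ℚ) : hc 0 (r + 1) x = 0 := by
  simp [hc]

lemma hc_one (r : ℕ) (x : ℕ → ℚ) : hc 1 r x = x 0 ^ r := by
  simp [hc]

lemma hc_peel_first (n r : ℕ) (x : ℕ → ℚ) :
    hc (n + 1) (r + 1) x = x 0 * hc (n + 1) r x + hc n (r + 1) (fun i => x (i + 1)) := by
  unfold hc
  rw [← Finset.sum_filter_add_sum_filter_not (Finset.Nat.antidiagonalTuple (n+1) (r+1))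
      (fun α => α 0 = 0), add_comm]
  congr 1
  · -- α 0 ≠ 0 part
    rw [Finset.mul_sum]
    refine Finset.sum_nbij' (i := fun α => Fin.cons (α 0 - 1) (Fin.tail α))
      (j := fun β => Fin.cons (β 0 + 1) (Fin.tail β)) ?_ ?_ ?_ ?_ ?_
    · intro α hα
      simp only [Finset.mem_filter, Finset.Nat.mem_antidiagonalTuple, Fin.sum_univ_succ,
        Fin.cons_zero, Fin.cons_succ, Fin.tail] at *
      omega
    · intro β hβ
      simp only [Finset.mem_filter, Finset.Nat.mem_antidiagonalTuple, Fin.sum_univ_succ,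
        Fin.cons_zero, Fin.cons_succ, Fin.tail] at *
      omega
    · intro α hα
      simp only [Finset.mem_filter] at hα
      have h0 : α 0 ≠ 0 := hα.2
      funext i
      refine Fin.cases ?_ ?_ i
      · simp only [Fin.cons_zero]; omega
      · intro j; simp [Fin.cons_succ, Fin.tail]
    · intro β hβ
      funext i
      refine Fin.cases ?_ ?_ i
      · simp [Fin.cons_zero]
      · intro j; simp [Fin.cons_succ, Fin.tail]
    · intro α hα
      simp only [Finset.mem_filter] at hα
      have h0 : α 0 ≠ 0 := hα.2
      rw [Fin.prod_univ_succ, Fin.prod_univ_succ]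
      simp only [Fin.cons_zero, Fin.cons_succ, Fin.val_succ, Fin.val_zero, Fin.tail]
      rw [← mul_assoc, ← pow_succ']
      congr 2
      omega
  · -- α 0 = 0 part
    refine Finset.sum_nbij' (i := fun α => Fin.tail α) (j := fun β => Fin.cons 0 β) ?_ ?_ ?_ ?_ ?_
    · intro α hα
      simp only [Finset.mem_filter, Finset.Nat.mem_antidiagonalTuple, Fin.sum_univ_succ,
        Fin.tail] at *
      omega
    · intro β hβ
      simp only [Finset.mem_filter, Finset.Nat.mem_antidiagonalTuple, Fin.sum_univ_succ,
        Fin.cons_zero, Fin.cons_succ, Fin.tail] at *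
      exact ⟨by omega, trivial⟩
    · intro α hα
      simp only [Finset.mem_filter] at hα
      rw [← hα.2]
      exact Fin.cons_self_tail α
    · intro β hβ
      funext i
      simp [Fin.tail, Fin.cons_succ]
    · intro α hα
      simp only [Finset.mem_filter] at hα
      rw [Fin.prod_univ_succ, hα.2, pow_zero, one_mul]
      simp [Fin.tail]

lemma hc_rev (n r : ℕ) (x : ℕ → ℚ) : hc n r x = hc n r (fun i => x (n - 1 - i)) := by
  unfold hc
  refine Finset.sum_nbij' (i := fun α => α ∘ Fin.rev) (j := fun α => α ∘ Fin.rev) ?_ ?_ ?_ ?_ ?_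
  · intro α hα
    simp only [Finset.Nat.mem_antidiagonalTuple] at *
    rw [← hα]
    exact Equiv.sum_comp (Fin.revPerm) α
  · intro α hα
    simp only [Finset.Nat.mem_antidiagonalTuple] at *
    rw [← hα]
    exact Equiv.sum_comp (Fin.revPerm) α
  · intro α _; funext i; simp [Fin.rev_rev]
  · intro α _; funext i; simp [Fin.rev_rev]
  · intro α hα
    rw [← Equiv.prod_comp (Fin.revPerm) (fun i => (fun j : ℕ => x (n - 1 - j)) (i : ℕ) ^ (α ∘ Fin.rev) i)]
    refine Finset.prod_congr rfl fun i _ => ?_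
    simp only [Function.comp_apply, Fin.revPerm_apply, Fin.rev_rev, Fin.val_rev]
    congr 2
    omega

lemma hc_peel_last (n r : ℕ) (x : ℕ → ℚ) :
    hc (n + 1) (r + 1) x = x n * hc (n + 1) r x + hc n (r + 1) x := by
  have h1 : hc (n + 1) (r + 1) x = hc (n + 1) (r + 1) (fun i => x (n - i)) := by
    have := hc_rev (n + 1) (r + 1) x
    simpa using this
  rw [h1, hc_peel_first, Nat.sub_zero]
  congr 1
  · congr 1
    have := hc_rev (n + 1) r x
    simpa using this.symm
  · have := hc_rev n (r + 1) x
    rw [this]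
    congr 1
    funext i
    congr 1
    omega

lemma hc_zero_first (n r : ℕ) (x : ℕ → ℚ) (h0 : x 0 = 0) :
    hc (n + 1) r x = hc n r (fun i => x (i + 1)) := by
  cases r with
  | zero => rw [hc_zero, hc_zero]
  | succ r => rw [hc_peel_first, h0, zero_mul, zero_add]

lemma hc_sub (s r : ℕ) (x : ℕ → ℚ) :
    hc (s + 1) (r + 1) (fun i => x (i + 1)) - hc (s + 1) (r + 1) x
      = hc (s + 2) r x * (x (s + 1) - x 0) := by
  have h1 := hc_peel_first (s + 1) r x
  have h2 := hc_peel_last (s + 1) r x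
  rw [show s + 1 + 1 = s + 2 from rfl] at h1 h2
  linear_combination h2 - h1

/-- divided difference sum -/
def DD (m n : ℕ) (x : ℕ → ℚ) : ℚ :=
  ∑ i ∈ Finset.range n, x i ^ m / ∏ l ∈ (Finset.range n).erase i, (x i - x l)

lemma auxE (a c Q : ℚ) (hc : c ≠ 0) : a / (c * Q) * (-c) = -(a / Q) := by
  rw [← mul_div_mul_left a Q hc, ← neg_div, div_mul_eq_mul_div]
  congr 1; ring

lemma auxF (a c Q : ℚ) (hc : c ≠ 0) : a / (c * Q) * c = a / Q := by
  rw [← mul_div_mul_left a Q hc, div_mul_eq_mul_div]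
  congr 1; ring

lemma aux2 (a u v A B : ℚ) (hu : u ≠ 0) (hv : v ≠ 0) (h : u * A = v * B) :
    a / (u * A) * (u - v) = a / A - a / B := by
  rw [← mul_div_mul_left a A hu, ← mul_div_mul_left a B hv, ← h,
    div_mul_eq_mul_div, ← sub_div]
  congr 1; ring

lemma ddrec (n m : ℕ) (x : ℕ → ℚ)
    (hx : ∀ i < n + 2, ∀ j < n + 2, i ≠ j → x i ≠ x j) :
    DD m (n + 1) (fun i => x (i + 1)) - DD m (n + 1) x
      = DD m (n + 2) x * (x (n + 1) - x 0) := by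
  have hA : DD m (n + 1) (fun i => x (i + 1))
      = ∑ i ∈ Finset.range (n + 2), (if i = 0 then 0 else
          x i ^ m / ∏ l ∈ ((Finset.range (n + 2)).erase i).erase 0, (x i - x l)) := by
    rw [Finset.sum_range_succ']
    simp only [reduceIte, add_zero]
    unfold DD
    refine Finset.sum_congr rfl fun i hi => ?_
    rw [if_neg (by omega)]
    congr 1
    rw [show ((Finset.range (n + 2)).erase (i + 1)).erase 0
        = Finset.image (· + 1) ((Finset.range (n + 1)).erase i) by
      ext l
      simp only [Finset.mem_erase, Finset.mem_range, Finset.mem_image]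
      constructor
      · rintro ⟨h1, h2, h3⟩; exact ⟨l - 1, ⟨by omega, by omega⟩, by omega⟩
      · rintro ⟨a, ⟨ha1, ha2⟩, rfl⟩; omega]
    rw [Finset.prod_image (by intro a _ b _ h; beta_reduce at h; omega)]
  have hB : DD m (n + 1) x
      = ∑ i ∈ Finset.range (n + 2), (if i = n + 1 then 0 else
          x i ^ m / ∏ l ∈ ((Finset.range (n + 2)).erase i).erase (n + 1), (x i - x l)) := by
    rw [Finset.sum_range_succ, if_pos rfl, add_zero]
    unfold DD
    refine Finset.sum_congr rfl fun i hi => ?_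
    rw [Finset.mem_range] at hi
    rw [if_neg (by omega)]
    congr 1
    congr 1
    ext l; simp only [Finset.mem_erase, Finset.mem_range]; omega
  rw [hA, hB, ← Finset.sum_sub_distrib, DD, Finset.sum_mul]
  refine Finset.sum_congr rfl fun i hi => ?_
  rw [Finset.mem_range] at hi
  by_cases hi0 : i = 0
  · subst hi0
    rw [if_pos rfl, if_neg (by omega), zero_sub]
    have hmem : n + 1 ∈ (Finset.range (n + 2)).erase 0 := by simp
    rw [← Finset.mul_prod_erase _ _ hmem]
    have hne : x 0 - x (n + 1) ≠ 0 :=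
      sub_ne_zero_of_ne (hx 0 (by omega) (n + 1) (by omega) (by omega))
    rw [show x (n + 1) - x 0 = -(x 0 - x (n + 1)) from by ring]
    exact (auxE _ _ _ hne).symm
  · by_cases hin : i = n + 1
    · subst hin
      rw [if_neg hi0, if_pos rfl, sub_zero]
      have hmem : 0 ∈ (Finset.range (n + 2)).erase (n + 1) := by simp
      rw [← Finset.mul_prod_erase _ _ hmem]
      have hne : x (n + 1) - x 0 ≠ 0 :=
        sub_ne_zero_of_ne (hx (n + 1) (by omega) 0 (by omega) (by omega))
      exact (auxF _ _ _ hne).symm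
    · rw [if_neg hi0, if_neg hin]
      have hm0 : 0 ∈ (Finset.range (n + 2)).erase i := by
        simp only [Finset.mem_erase, Finset.mem_range]; omega
      have hm1 : n + 1 ∈ (Finset.range (n + 2)).erase i := by
        simp only [Finset.mem_erase, Finset.mem_range]; omega
      have hu : x i - x 0 ≠ 0 :=
        sub_ne_zero_of_ne (hx i (by omega) 0 (by omega) (by omega))
      have hv : x i - x (n + 1) ≠ 0 :=
        sub_ne_zero_of_ne (hx i (by omega) (n + 1) (by omega) (by omega))
      have h : (x i - x 0) * ∏ l ∈ ((Finset.range (n + 2)).erase i).erase 0, (x i - x l)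
          = (x i - x (n + 1)) *
            ∏ l ∈ ((Finset.range (n + 2)).erase i).erase (n + 1), (x i - x l) :=
        (Finset.mul_prod_erase _ (fun l => x i - x l) hm0).trans
          (Finset.mul_prod_erase _ (fun l => x i - x l) hm1).symm
      rw [← Finset.mul_prod_erase _ _ hm0,
        show x (n + 1) - x 0 = (x i - x 0) - (x i - x (n + 1)) from by ring]
      exact (aux2 _ _ _ _ _ hu hv h).symm

lemma core : ∀ s r : ℕ, ∀ x : ℕ → ℚ, (∀ i < s + 1, ∀ j < s + 1, i ≠ j → x i ≠ x j) →
    DD (s + r) (s + 1) x = hc (s + 1) r x := by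
  intro s
  induction s with
  | zero =>
    intro r x _
    rw [hc_one]
    simp [DD]
  | succ s ih =>
    intro r x hx
    have hx' : ∀ i < s + 2, ∀ j < s + 2, i ≠ j → x i ≠ x j := by
      intro i hi j hj hij; exact hx i (by omega) j (by omega) hij
    have h1 := ddrec s (s + 1 + r) x hx'
    have hxs : ∀ i < s + 1, ∀ j < s + 1, i ≠ j → (fun i => x (i + 1)) i ≠ (fun i => x (i + 1)) j := by
      intro i hi j hj hij
      exact hx (i + 1) (by omega) (j + 1) (by omega) (by omega)
    have hxf : ∀ i < s + 1, ∀ j < s + 1, i ≠ j → x i ≠ x j := by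
      intro i hi j hj hij; exact hx i (by omega) j (by omega) hij
    have e : s + 1 + r = s + (r + 1) := by omega
    rw [e] at h1
    rw [ih (r + 1) _ hxs, ih (r + 1) x hxf, hc_sub] at h1
    have hc0 : x (s + 1) - x 0 ≠ 0 :=
      sub_ne_zero_of_ne (hx (s + 1) (by omega) 0 (by omega) (by omega))
    have := mul_right_cancel₀ hc0 h1
    rw [show s + 1 + r = s + (r + 1) from by omega]
    exact this.symm

lemma sign_alg (X p : ℚ) (i k : ℕ) :
    (-1 : ℚ) ^ i * X / p = (-1 : ℚ) ^ (i + k) * (X / ((-1 : ℚ) ^ k * p)) := by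
  have hpow : ((-1 : ℚ) ^ k) * (-1 : ℚ) ^ k = 1 := by
    rw [← pow_add]; exact Even.neg_one_pow ⟨k, rfl⟩
  rw [div_mul_eq_div_div_swap, div_eq_mul_inv (X / p), ← inv_pow, inv_neg, inv_one,
    mul_div_assoc, pow_add]
  linear_combination (-((-1 : ℚ) ^ i * (X / p))) * hpow

/-- For a degree sequence `0 = d_0 < d_1 < ⋯ < d_s` and `r ≥ 0`,
`Σ_{i=0}^s (-1)^i d_i^{s+r} / Π_{l ≠ i} |d_l - d_i| = (-1)^s h_r(d_1, …, d_s)`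
in `ℚ`, where `h_r` is the complete homogeneous symmetric function of degree `r`. -/
theorem stmt7 (s : ℕ) (d : ℕ → ℤ) (hd : ∀ i < s, d i < d (i + 1)) (hd0 : d 0 = 0)
    (r : ℕ) :
    ∑ i ∈ Finset.range (s + 1),
        (-1 : ℚ) ^ i * (d i : ℚ) ^ (s + r) /
          ∏ l ∈ (Finset.range (s + 1)).erase i, |(d l : ℚ) - (d i : ℚ)| =
    (-1 : ℚ) ^ s *
      ∑ α ∈ Finset.Nat.antidiagonalTuple s r, ∏ i : Fin s, (d ((i : ℕ) + 1) : ℚ) ^ α i := by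
  have mono : ∀ j i : ℕ, i < j → j ≤ s → d i < d j := by
    intro j
    induction j with
    | zero => intro i h _; omega
    | succ j ihj =>
      intro i h hj
      rcases Nat.lt_succ_iff_lt_or_eq.mp h with h' | h'
      · exact lt_trans (ihj i h' (by omega)) (hd j (by omega))
      · subst h'; exact hd i (by omega)
  have hx : ∀ i < s + 1, ∀ j < s + 1, i ≠ j → ((d i : ℚ)) ≠ ((d j : ℚ)) := by
    intro i hi j hj hij
    rcases Nat.lt_or_ge i j with h | h
    · exact ne_of_lt (by exact_mod_cast mono j i h (by omega))
    · exact (ne_of_lt (by exact_mod_cast mono i j (by omega) (by omega))).symm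
  have step : ∀ i ∈ Finset.range (s + 1),
      (-1 : ℚ) ^ i * (d i : ℚ) ^ (s + r) /
          ∏ l ∈ (Finset.range (s + 1)).erase i, |(d l : ℚ) - (d i : ℚ)|
        = (-1 : ℚ) ^ s * ((d i : ℚ) ^ (s + r) /
            ∏ l ∈ (Finset.range (s + 1)).erase i, ((d i : ℚ) - (d l : ℚ))) := by
    intro i hi
    rw [Finset.mem_range] at hi
    obtain ⟨k, hk⟩ : ∃ k, s = i + k := ⟨s - i, by omega⟩
    have habs : ∀ l ∈ (Finset.range (s + 1)).erase i,
        ((d i : ℚ) - (d l : ℚ)) = (if l < i then (1 : ℚ) else -1) * |(d l : ℚ) - (d i : ℚ)| := by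
      intro l hl
      simp only [Finset.mem_erase, Finset.mem_range] at hl
      rcases lt_or_gt_of_ne hl.1 with h | h
      · have hlt : (d l : ℚ) < (d i : ℚ) := by exact_mod_cast mono i l h (by omega)
        rw [if_pos h, one_mul, abs_of_neg (by linarith)]
        ring
      · have hlt : (d i : ℚ) < (d l : ℚ) := by exact_mod_cast mono l i h (by omega)
        rw [if_neg (by omega), abs_of_pos (by linarith)]
        ring
    have hsign : ∏ l ∈ (Finset.range (s + 1)).erase i, ((d i : ℚ) - (d l : ℚ))
        = (-1 : ℚ) ^ k * ∏ l ∈ (Finset.range (s + 1)).erase i, |(d l : ℚ) - (d i : ℚ)| := by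
      rw [Finset.prod_congr rfl habs, Finset.prod_mul_distrib]
      congr 1
      rw [Finset.prod_ite, Finset.prod_const_one, Finset.prod_const, one_mul]
      congr 1
      rw [show ((Finset.range (s + 1)).erase i).filter (fun l => ¬ l < i)
          = Finset.Ico (i + 1) (s + 1) from by
        ext l; simp only [Finset.mem_filter, Finset.mem_erase, Finset.mem_range,
          Finset.mem_Ico, not_lt]; omega, Nat.card_Ico]
      omega
    rw [hsign, show s = i + k from hk]
    exact sign_alg _ _ i k
  rw [Finset.sum_congr rfl step, ← Finset.mul_sum]
  congr 1
  have hcore := core s r (fun i => (d i : ℚ)) hx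
  have hzero : hc (s + 1) r (fun i => (d i : ℚ)) = hc s r (fun i => (d (i + 1) : ℚ)) :=
    hc_zero_first s r _ (by exact_mod_cast hd0)
  calc ∑ i ∈ Finset.range (s + 1), ((d i : ℚ) ^ (s + r) /
        ∏ l ∈ (Finset.range (s + 1)).erase i, ((d i : ℚ) - (d l : ℚ)))
      = DD (s + r) (s + 1) (fun i => (d i : ℚ)) := rfl
    _ = hc (s + 1) r (fun i => (d i : ℚ)) := hcore
    _ = hc s r (fun i => (d (i + 1) : ℚ)) := hzero
    _ = ∑ α ∈ Finset.Nat.antidiagonalTuple s r, ∏ i : Fin s, (d ((i : ℕ) + 1) : ℚ) ^ α i := rfl
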